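/- Let ρ ≥ 0, a_max ≥ 0 and 0 < b_min ≤ b_max, and define the RSS safety distance dRSS(v_f, v_r) = max(0, v_r·ρ + (a_max/2)·ρ² + (v_r + a_max·ρ)²/(2·b_min) − v_f²/(2·b_max)). Let y_r, y_f : ℝ → ℝ (positions of the rear and front vehicles) and v_r, v_f : ℝ → ℝ (their velocities) satisfy: for every t ≥ 0, y_r has derivative v_r(t) at t and y_f has derivative v_f(t) at t; v_r and v_f are differentiable on [0,∞) with v_r(t) ≥ 0 and v_f(t) ≥ 0 for all t ≥ 0; v_f′(t) ≥ −b_max for every t ≥ 0 at which v_f(t) > 0 (the front vehicle brakes at most at rate b_max); v_r′(t) ≤ a_max for every t ∈ [0, ρ] and v_r′(t) ≤ −b_min for every t > ρ at which v_r(t) > 0 (the rear vehicle executes the proper response: it accelerates at most at a_max during the response time ρ and then brakes at least at b_min until stopped). If y_f(0) − y_r(0) > dRSS(v_f(0), v_r(0)), then y_r(t) < y_f(t) for every t ≥ 0; i.e., the vehicles never collide. -/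

import Mathlib

open Set Filter

/-- The RSS safety distance. -/
noncomputable def dRSS (ρ a_max b_min b_max v_f v_r : ℝ) : ℝ :=
  max 0 (v_r * ρ + (a_max / 2) * ρ ^ 2 +
    (v_r + a_max * ρ) ^ 2 / (2 * b_min) - v_f ^ 2 / (2 * b_max))

theorem rss_conditional_safety_one_way_traffic
    (ρ a_max b_min b_max : ℝ)
    (hρ : 0 ≤ ρ) (ha : 0 ≤ a_max) (hbmin : 0 < b_min) (hb : b_min ≤ b_max)
    (y_r y_f v_r v_f : ℝ → ℝ)
    (hyr : ∀ t : ℝ, 0 ≤ t → HasDerivAt y_r (v_r t) t)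
    (hyf : ∀ t : ℝ, 0 ≤ t → HasDerivAt y_f (v_f t) t)
    (hvr_diff : ∀ t : ℝ, 0 ≤ t → DifferentiableAt ℝ v_r t)
    (hvf_diff : ∀ t : ℝ, 0 ≤ t → DifferentiableAt ℝ v_f t)
    (hvr_nonneg : ∀ t : ℝ, 0 ≤ t → 0 ≤ v_r t)
    (hvf_nonneg : ∀ t : ℝ, 0 ≤ t → 0 ≤ v_f t)
    (hvf_brake : ∀ t : ℝ, 0 ≤ t → 0 < v_f t → -b_max ≤ deriv v_f t)
    (hvr_accel : ∀ t : ℝ, 0 ≤ t → t ≤ ρ → deriv v_r t ≤ a_max)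
    (hvr_brake : ∀ t : ℝ, ρ < t → 0 < v_r t → deriv v_r t ≤ -b_min)
    (hinit : y_f 0 - y_r 0 > dRSS ρ a_max b_min b_max (v_f 0) (v_r 0)) :
    ∀ t : ℝ, 0 ≤ t → y_r t < y_f t := by
  have hbmax : 0 < b_max := lt_of_lt_of_le hbmin hb
  -- derivative facts
  have hPderiv : ∀ t : ℝ, 0 ≤ t →
      HasDerivAt (fun s => y_f s + (v_f s) ^ 2 / (2 * b_max))
        (v_f t + 2 * v_f t * deriv v_f t / (2 * b_max)) t := by
    intro t ht
    have h1 : HasDerivAt (fun s => (v_f s) ^ 2)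
        ((2 : ℕ) * v_f t ^ (2 - 1) * deriv v_f t) t := ((hvf_diff t ht).hasDerivAt).pow 2
    have hsum := (hyf t ht).add (h1.div_const (2 * b_max))
    have heq : v_f t + ((2 : ℕ) * v_f t ^ (2 - 1) * deriv v_f t) / (2 * b_max) =
        v_f t + 2 * v_f t * deriv v_f t / (2 * b_max) := by push_cast; ring
    rw [heq] at hsum; exact hsum
  have hQ2deriv : ∀ t : ℝ, 0 ≤ t →
      HasDerivAt (fun s => y_r s + (v_r s) ^ 2 / (2 * b_min))
        (v_r t + 2 * v_r t * deriv v_r t / (2 * b_min)) t := by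
    intro t ht
    have h1 : HasDerivAt (fun s => (v_r s) ^ 2)
        ((2 : ℕ) * v_r t ^ (2 - 1) * deriv v_r t) t := ((hvr_diff t ht).hasDerivAt).pow 2
    have hsum := (hyr t ht).add (h1.div_const (2 * b_min))
    have heq : v_r t + ((2 : ℕ) * v_r t ^ (2 - 1) * deriv v_r t) / (2 * b_min) =
        v_r t + 2 * v_r t * deriv v_r t / (2 * b_min) := by push_cast; ring
    rw [heq] at hsum; exact hsum
  have hQ1deriv : ∀ t : ℝ, 0 ≤ t →
      HasDerivAt (fun s => y_r s + v_r s * (ρ - s) + (a_max / 2) * (ρ - s) ^ 2 +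
          (v_r s + a_max * (ρ - s)) ^ 2 / (2 * b_min))
        ((deriv v_r t - a_max) * ((ρ - t) + (v_r t + a_max * (ρ - t)) / b_min)) t := by
    intro t ht
    have hvr := (hvr_diff t ht).hasDerivAt
    have hlin : HasDerivAt (fun s : ℝ => ρ - s) (-1) t := by
      simpa using (hasDerivAt_id t).const_sub ρ
    have h1 : HasDerivAt (fun s => v_r s * (ρ - s)) (deriv v_r t * (ρ - t) + v_r t * (-1)) t :=
      hvr.mul hlin
    have h2 : HasDerivAt (fun s => (a_max / 2) * (ρ - s) ^ 2)
        ((a_max / 2) * ((2 : ℕ) * (ρ - t) ^ (2 - 1) * (-1))) t := (hlin.pow 2).const_mul _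
    have h3 : HasDerivAt (fun s => (v_r s + a_max * (ρ - s)) ^ 2 / (2 * b_min))
        (((2 : ℕ) * (v_r t + a_max * (ρ - t)) ^ (2 - 1) * (deriv v_r t + a_max * (-1))) /
          (2 * b_min)) t :=
      ((hvr.add (hlin.const_mul a_max)).pow 2).div_const _
    have hsum := (((hyr t ht).add h1).add h2).add h3
    have heq : v_r t + (deriv v_r t * (ρ - t) + v_r t * (-1)) +
        (a_max / 2) * ((2 : ℕ) * (ρ - t) ^ (2 - 1) * (-1)) +
        ((2 : ℕ) * (v_r t + a_max * (ρ - t)) ^ (2 - 1) * (deriv v_r t + a_max * (-1))) /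
          (2 * b_min) =
        (deriv v_r t - a_max) * ((ρ - t) + (v_r t + a_max * (ρ - t)) / b_min) := by
      push_cast; field_simp; ring
    rw [heq] at hsum; exact hsum
  -- monotonicity of the front stopping point on [0, ∞)
  have hPmono : MonotoneOn (fun t => y_f t + (v_f t) ^ 2 / (2 * b_max)) (Ici 0) := by
    apply monotoneOn_of_deriv_nonneg (convex_Ici 0)
    · intro t ht
      exact (((hyf t ht).continuousAt).add
        ((((hvf_diff t ht).continuousAt).pow 2).div_const _)).continuousWithinAt
    · intro x hx
      rw [interior_Ici] at hx
      exact ((hPderiv x (le_of_lt hx)).differentiableAt).differentiableWithinAt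
    · intro x hx
      rw [interior_Ici] at hx
      rw [(hPderiv x (le_of_lt hx)).deriv]
      rcases eq_or_lt_of_le (hvf_nonneg x (le_of_lt hx)) with h0 | hpos
      · rw [← h0]; simp
      · have hd := hvf_brake x (le_of_lt hx) hpos
        have heq : v_f x + 2 * v_f x * deriv v_f x / (2 * b_max) =
            v_f x * (b_max + deriv v_f x) / b_max := by field_simp
        rw [heq]
        exact div_nonneg (mul_nonneg hpos.le (by linarith)) hbmax.le
  -- antitonicity of rear worst-case stopping point during the response time
  have hQ1anti : AntitoneOn (fun t => y_r t + v_r t * (ρ - t) + (a_max / 2) * (ρ - t) ^ 2 +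
      (v_r t + a_max * (ρ - t)) ^ 2 / (2 * b_min)) (Icc 0 ρ) := by
    apply antitoneOn_of_deriv_nonpos (convex_Icc 0 ρ)
    · intro t ht
      have hvrc := (hvr_diff t ht.1).continuousAt
      exact ((((hyr t ht.1).continuousAt.add (hvrc.mul (by fun_prop))).add
        (by fun_prop)).add (((hvrc.add (by fun_prop)).pow 2).div_const _)).continuousWithinAt
    · intro x hx
      rw [interior_Icc] at hx
      exact ((hQ1deriv x hx.1.le).differentiableAt).differentiableWithinAt
    · intro x hx
      rw [interior_Icc] at hx
      rw [(hQ1deriv x hx.1.le).deriv]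
      apply mul_nonpos_of_nonpos_of_nonneg
      · have := hvr_accel x hx.1.le hx.2.le
        linarith
      · have h1 : 0 ≤ ρ - x := by linarith [hx.2]
        have h2 : 0 ≤ v_r x := hvr_nonneg x hx.1.le
        have h3 : 0 ≤ (v_r x + a_max * (ρ - x)) / b_min :=
          div_nonneg (by nlinarith) hbmin.le
        linarith
  -- antitonicity of rear stopping point after the response time
  have hQ2anti : AntitoneOn (fun t => y_r t + (v_r t) ^ 2 / (2 * b_min)) (Ici ρ) := by
    apply antitoneOn_of_deriv_nonpos (convex_Ici ρ)
    · intro t ht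
      have ht0 : (0:ℝ) ≤ t := le_trans hρ ht
      exact (((hyr t ht0).continuousAt).add
        ((((hvr_diff t ht0).continuousAt).pow 2).div_const _)).continuousWithinAt
    · intro x hx
      rw [interior_Ici] at hx
      exact ((hQ2deriv x (le_of_lt (lt_of_le_of_lt hρ hx))).differentiableAt).differentiableWithinAt
    · intro x hx
      rw [interior_Ici] at hx
      have hx0 : (0:ℝ) ≤ x := le_of_lt (lt_of_le_of_lt hρ hx)
      rw [(hQ2deriv x hx0).deriv]
      rcases eq_or_lt_of_le (hvr_nonneg x hx0) with h0 | hpos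
      · rw [← h0]; simp
      · have hd := hvr_brake x hx hpos
        have heq : v_r x + 2 * v_r x * deriv v_r x / (2 * b_min) =
            v_r x * (b_min + deriv v_r x) / b_min := by field_simp
        rw [heq]
        exact div_nonpos_of_nonpos_of_nonneg
          (mul_nonpos_of_nonneg_of_nonpos hpos.le (by linarith)) hbmin.le
  -- initial comparison
  have hinit' : y_r 0 + v_r 0 * ρ + (a_max / 2) * ρ ^ 2 + (v_r 0 + a_max * ρ) ^ 2 / (2 * b_min) <
      y_f 0 + (v_f 0) ^ 2 / (2 * b_max) := by
    have hle : v_r 0 * ρ + (a_max / 2) * ρ ^ 2 +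
        (v_r 0 + a_max * ρ) ^ 2 / (2 * b_min) - (v_f 0) ^ 2 / (2 * b_max) ≤
        dRSS ρ a_max b_min b_max (v_f 0) (v_r 0) := le_max_right _ _
    linarith
  have hg0 : y_r 0 < y_f 0 := by
    have h0 : (0:ℝ) ≤ dRSS ρ a_max b_min b_max (v_f 0) (v_r 0) := le_max_left _ _
    linarith
  -- key lemma: whenever the rear has caught up with the front, the front is strictly faster
  have hkey : ∀ τ : ℝ, 0 ≤ τ → y_f τ ≤ y_r τ → v_r τ < v_f τ := by
    intro τ hτ0 hcol
    have hQτ : y_r τ + (v_r τ) ^ 2 / (2 * b_min) < y_f τ + (v_f τ) ^ 2 / (2 * b_max) := by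
      have hP : y_f 0 + (v_f 0) ^ 2 / (2 * b_max) ≤ y_f τ + (v_f τ) ^ 2 / (2 * b_max) := by
        simpa using hPmono (self_mem_Ici) (by exact hτ0) hτ0
      rcases le_or_gt τ ρ with hcase | hcase
      · have h1 : y_r τ + v_r τ * (ρ - τ) + (a_max / 2) * (ρ - τ) ^ 2 +
            (v_r τ + a_max * (ρ - τ)) ^ 2 / (2 * b_min) ≤
            y_r 0 + v_r 0 * (ρ - 0) + (a_max / 2) * (ρ - 0) ^ 2 +
            (v_r 0 + a_max * (ρ - 0)) ^ 2 / (2 * b_min) := by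
          simpa using hQ1anti (by exact ⟨le_refl 0, hρ⟩) (by exact ⟨hτ0, hcase⟩) hτ0
        have hc : 0 ≤ ρ - τ := by linarith
        have hv := hvr_nonneg τ hτ0
        have hsq : (v_r τ) ^ 2 ≤ (v_r τ + a_max * (ρ - τ)) ^ 2 := by
          nlinarith [mul_nonneg ha hc, mul_nonneg hv (mul_nonneg ha hc),
            sq_nonneg (a_max * (ρ - τ))]
        have hdiv : (v_r τ) ^ 2 / (2 * b_min) ≤ (v_r τ + a_max * (ρ - τ)) ^ 2 / (2 * b_min) :=
          (div_le_div_iff_of_pos_right (by linarith)).mpr hsq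
        have hterm1 : 0 ≤ v_r τ * (ρ - τ) := mul_nonneg hv hc
        have hterm2 : 0 ≤ (a_max / 2) * (ρ - τ) ^ 2 :=
          mul_nonneg (by linarith) (sq_nonneg _)
        have h0 : y_r 0 + v_r 0 * (ρ - 0) + (a_max / 2) * (ρ - 0) ^ 2 +
            (v_r 0 + a_max * (ρ - 0)) ^ 2 / (2 * b_min) =
            y_r 0 + v_r 0 * ρ + (a_max / 2) * ρ ^ 2 +
            (v_r 0 + a_max * ρ) ^ 2 / (2 * b_min) := by ring_nf
        linarith
      · have h1 : y_r τ + (v_r τ) ^ 2 / (2 * b_min) ≤ y_r ρ + (v_r ρ) ^ 2 / (2 * b_min) := by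
          simpa using hQ2anti (self_mem_Ici) (le_of_lt hcase) (le_of_lt hcase)
        have h2 : y_r ρ + v_r ρ * (ρ - ρ) + (a_max / 2) * (ρ - ρ) ^ 2 +
            (v_r ρ + a_max * (ρ - ρ)) ^ 2 / (2 * b_min) ≤
            y_r 0 + v_r 0 * (ρ - 0) + (a_max / 2) * (ρ - 0) ^ 2 +
            (v_r 0 + a_max * (ρ - 0)) ^ 2 / (2 * b_min) := by
          simpa using hQ1anti (by exact ⟨le_refl 0, hρ⟩) (by exact ⟨hρ, le_refl ρ⟩) hρ
        have h2' : y_r ρ + v_r ρ * (ρ - ρ) + (a_max / 2) * (ρ - ρ) ^ 2 +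
            (v_r ρ + a_max * (ρ - ρ)) ^ 2 / (2 * b_min) =
            y_r ρ + (v_r ρ) ^ 2 / (2 * b_min) := by ring_nf
        have h0 : y_r 0 + v_r 0 * (ρ - 0) + (a_max / 2) * (ρ - 0) ^ 2 +
            (v_r 0 + a_max * (ρ - 0)) ^ 2 / (2 * b_min) =
            y_r 0 + v_r 0 * ρ + (a_max / 2) * ρ ^ 2 +
            (v_r 0 + a_max * ρ) ^ 2 / (2 * b_min) := by ring_nf
        linarith
    -- conclude v_r τ < v_f τ
    have hmono : (v_r τ) ^ 2 / (2 * b_max) ≤ (v_r τ) ^ 2 / (2 * b_min) :=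
      div_le_div_of_nonneg_left (sq_nonneg _) (by linarith) (by linarith)
    have h2 : (v_r τ) ^ 2 / (2 * b_max) < (v_f τ) ^ 2 / (2 * b_max) := by linarith
    have hlt : (v_r τ) ^ 2 < (v_f τ) ^ 2 :=
      (div_lt_div_iff_of_pos_right (show (0:ℝ) < 2 * b_max by linarith)).mp h2
    exact lt_of_pow_lt_pow_left₀ 2 (hvf_nonneg τ hτ0) hlt
  -- first collision time argument
  by_contra hcon
  push_neg at hcon
  obtain ⟨t₀, ht₀, hcol₀⟩ := hcon
  set S : Set ℝ := {t : ℝ | 0 ≤ t ∧ y_f t ≤ y_r t} with hSdef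
  have hgcont : ContinuousOn (fun t => y_f t - y_r t) (Ici 0) := fun t ht =>
    (((hyf t ht).continuousAt).sub ((hyr t ht).continuousAt)).continuousWithinAt
  have hSeq : S = Ici 0 ∩ (fun t => y_f t - y_r t) ⁻¹' (Iic 0) := by
    ext t
    simp only [hSdef, mem_setOf_eq, mem_inter_iff, mem_Ici, mem_preimage, mem_Iic, sub_nonpos]
  have hSclosed : IsClosed S := by
    rw [hSeq]
    exact hgcont.preimage_isClosed_of_isClosed isClosed_Ici isClosed_Iic
  have hSne : S.Nonempty := ⟨t₀, ht₀, hcol₀⟩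
  have hSbdd : BddBelow S := ⟨0, fun x hx => hx.1⟩
  have hτS : sInf S ∈ S := hSclosed.csInf_mem hSne hSbdd
  set τ := sInf S with hτdef
  have hτ0 : 0 ≤ τ := hτS.1
  have hτcol : y_f τ ≤ y_r τ := hτS.2
  have hτpos : 0 < τ := by
    rcases hτ0.lt_or_eq with h | h
    · exact h
    · exfalso; rw [← h] at hτcol; linarith
  have hfast : v_r τ < v_f τ := hkey τ hτ0 hτcol
  have hder : HasDerivAt (fun t => y_f t - y_r t) (v_f τ - v_r τ) τ :=
    (hyf τ hτ0).sub (hyr τ hτ0)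
  rw [hasDerivAt_iff_tendsto_slope] at hder
  have hpos : 0 < v_f τ - v_r τ := by linarith
  have hev : ∀ᶠ s in nhdsWithin τ {τ}ᶜ, 0 < slope (fun t => y_f t - y_r t) τ s :=
    hder.eventually (eventually_gt_nhds hpos)
  have hmono' : nhdsWithin τ (Iio τ) ≤ nhdsWithin τ {τ}ᶜ :=
    nhdsWithin_mono τ (fun x (hx : x ∈ Iio τ) => (ne_of_lt hx : x ≠ τ))
  have hev' : ∀ᶠ s in nhdsWithin τ (Iio τ), 0 < slope (fun t => y_f t - y_r t) τ s :=
    hev.filter_mono hmono'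
  have hIoo : Ioo 0 τ ∈ nhdsWithin τ (Iio τ) :=
    Ioo_mem_nhdsLT_of_mem ⟨hτpos, le_refl τ⟩
  obtain ⟨s, hs1, hs2⟩ := (hev'.and (eventually_of_mem hIoo (fun x hx => hx))).exists
  have hsτ : s - τ < 0 := by
    have := hs2.2; linarith
  have hslope : slope (fun t => y_f t - y_r t) τ s =
      ((y_f s - y_r s) - (y_f τ - y_r τ)) / (s - τ) := by
    simp [slope_def_field]
  rw [hslope] at hs1
  have hnum : (y_f s - y_r s) - (y_f τ - y_r τ) < 0 := by
    rcases div_pos_iff.mp hs1 with ⟨h1, h2⟩ | ⟨h1, h2⟩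
    · linarith
    · linarith
  have hsS : s ∈ S := ⟨hs2.1.le, by linarith⟩
  have : τ ≤ s := csInf_le hSbdd hsS
  linarith [hs2.2]
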